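/- Let p be an odd prime, k, n positive integers with n | p - 1, q = p^k, and d = (q^{p-1} - 1)/(q - 1) + 1. Let a ∈ F_{q^n} with a^{q-1} an n-th root of unity different from 1. Then both a^{-1}·x^d and a^{-1}·x^d + x induce bijections of F_{q^n} (i.e., a^{-1}·x^d is a complete permutation polynomial of F_{q^n}). -/

import Mathlib

open Finset Polynomial

lemma cpp_key_cancel {F : Type*} [Field F] (p : ℕ) [Fact p.Prime] [CharP F p]
    (α z1 z2 : F) (l L : ℕ) (hL : L = (p - 1) * l)
    (h1 : z1 ^ l = 1) (hal : α ^ l ≠ 1)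
    (hD : z1 - z2 ≠ 0 → (z1 - z2) ^ L = 1)
    (hz2a : z2 - α ≠ 0) (hz2aL : (z2 - α) ^ L = 1)
    (hZ : z1 * (z1 - α) ^ (p - 1) = z2 * (z2 - α) ^ (p - 1)) : z1 = z2 := by
  by_contra hne
  have hD0 : z1 - z2 ≠ 0 := sub_ne_zero.mpr hne
  have hp1 : p - 1 + 1 = p := Nat.succ_pred_eq_of_pos (Fact.out : p.Prime).pos
  have e1 : ∀ w : F, w ^ p = w ^ (p - 1) * w := fun w => by rw [← pow_succ, hp1]
  have E1 : z1 * (z1 ^ p - α ^ p) * (z2 - α) = z2 * (z2 ^ p - α ^ p) * (z1 - α) := by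
    rw [← sub_pow_char z1 α, ← sub_pow_char z2 α, e1 (z1 - α), e1 (z2 - α)]
    linear_combination ((z1 - α) * (z2 - α)) * hZ
  have key : (z1 - z2) ^ p * (z1 * (z2 - α)) = α * (z1 - z2) * (z2 - α) ^ p := by
    rw [sub_pow_char z1 z2, sub_pow_char z2 α]
    linear_combination E1
  have keyE : (z1 - z2) ^ (p - 1) * (z1 * (z2 - α)) = α * (z2 - α) ^ p := by
    apply mul_left_cancel₀ hD0
    rw [e1 (z1 - z2)] at key
    linear_combination key
  have keyF : (z1 - z2) ^ (p - 1) * z1 = α * (z2 - α) ^ (p - 1) := by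
    apply mul_right_cancel₀ hz2a
    rw [e1 (z2 - α)] at keyE
    linear_combination keyE
  have hfin := congrArg (· ^ l) keyF
  simp only [mul_pow, ← pow_mul, ← hL] at hfin
  rw [hD hD0, h1, hz2aL, one_mul, mul_one] at hfin
  exact hal hfin.symm

/-- CPP monomials with d = (q^{p-1}-1)/(q-1)+1 and a^{q-1} ∈ μ_n \ {1}, n | p-1. -/
theorem cpp_monomial_n_dvd_p_sub_one (p k n : ℕ) (hp : p.Prime) (hodd : Odd p)
    (hk : 0 < k) (hn : 0 < n) (hnd : n ∣ p - 1)
    {F : Type*} [Field F] [Fintype F] (hF : Fintype.card F = (p ^ k) ^ n)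
    (d : ℕ) (hd : d = ((p ^ k) ^ (p - 1) - 1) / (p ^ k - 1) + 1)
    (a : F) (ha1 : (a ^ (p ^ k - 1)) ^ n = 1) (ha2 : a ^ (p ^ k - 1) ≠ 1) :
    Function.Bijective (fun x : F => a⁻¹ * x ^ d) ∧
      Function.Bijective (fun x : F => a⁻¹ * x ^ d + x) := by
  classical
  haveI hfp : Fact p.Prime := ⟨hp⟩
  set q := p ^ k with hqdef
  -- basic numeric facts
  have hp2 : 2 ≤ p := hp.two_le
  have hp3 : 3 ≤ p := by rcases hodd with ⟨j, hj⟩; omega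
  have hq3 : 3 ≤ q := le_trans hp3 (Nat.le_self_pow hk.ne' p)
  have hq1 : 1 ≤ q := by omega
  have hqodd : Odd q := hodd.pow
  have hqe : Even (q - 1) := Nat.Odd.sub_odd hqodd odd_one
  -- characteristic
  haveI hchar : CharP F p := by
    have h0 : ((Fintype.card F : ℕ) : F) = 0 := FiniteField.cast_card_eq_zero F
    rw [hF, hqdef] at h0
    push_cast at h0
    have hp0 : (p : F) = 0 := by
      have h1 : (p : F) ^ (k * n) = 0 := by rw [pow_mul]; exact h0
      exact (pow_eq_zero_iff (Nat.mul_ne_zero hk.ne' hn.ne')).mp h1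
    have hdvd : ringChar F ∣ p := (CharP.cast_eq_zero_iff F (ringChar F) p).mp hp0
    rcases hp.eq_one_or_self_of_dvd _ hdvd with h | h
    · exact absurd h (CharP.char_ne_one F (ringChar F))
    · exact h ▸ ringChar.charP F
  -- a ≠ 0
  have ha0 : a ≠ 0 := by
    intro h
    rw [h, zero_pow (by omega : q - 1 ≠ 0), zero_pow hn.ne'] at ha1
    exact zero_ne_one ha1
  obtain ⟨m, hm⟩ := hnd  -- p - 1 = n * m
  have hnp : n ∣ p - 1 := ⟨m, hm⟩
  -- geometric sums
  have geom : ∀ c : ℕ, (∑ i ∈ Finset.range c, q ^ i) * (q - 1) + 1 = q ^ c := by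
    intro c
    have h := geom_sum_mul (q : ℤ) c
    zify [hq1, Nat.one_le_pow c q (by omega)]
    linarith [h]
  set σ := ∑ i ∈ Finset.range n, q ^ i with hσdef
  set τ := ∑ i ∈ Finset.range (p - 1), q ^ i with hτdef
  have hσ : σ * (q - 1) + 1 = q ^ n := geom n
  have hcard1 : Fintype.card F - 1 = σ * (q - 1) := by
    rw [hF, ← hσ, Nat.add_sub_cancel]
  have hdτ : d = τ + 1 := by
    have hg := geom (p - 1)
    have h1 : q ^ (p - 1) - 1 = τ * (q - 1) := by rw [← hg, Nat.add_sub_cancel]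
    rw [hd, h1, Nat.mul_div_cancel τ (by omega : 0 < q - 1)]
  have hd0 : d ≠ 0 := by rw [hdτ]; exact Nat.succ_ne_zero τ
  -- field facts
  have hpow_card : ∀ x : F, x ^ q ^ n = x := fun x => by
    rw [← hF]; exact FiniteField.pow_card x
  have hcq1 : ∀ x : F, x ≠ 0 → (x ^ σ) ^ (q - 1) = 1 := fun x hx => by
    rw [← pow_mul, ← hcard1]; exact FiniteField.pow_card_sub_one_eq_one x hx
  have hfix : ∀ y : F, y ^ (q - 1) = 1 → y ^ q = y := by
    intro y hy
    have h1 : y ^ ((q - 1) + 1) = y ^ (q - 1) * y := pow_succ y (q - 1)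
    rw [hy, one_mul] at h1
    rw [← h1]; congr 1; omega
  have hfix' : ∀ y : F, y ≠ 0 → y ^ q = y → y ^ (q - 1) = 1 := by
    intro y hy h
    apply mul_right_cancel₀ hy
    rw [← pow_succ, one_mul, show q - 1 + 1 = q by omega, h]
  -- b
  set b := a ^ (q - 1) with hbdef
  have hnq : n ∣ q - 1 := by
    refine hnp.trans ?_
    simpa using Nat.sub_dvd_pow_sub_pow p 1 k
  have hbq1 : b ^ (q - 1) = 1 := by
    obtain ⟨w, hw⟩ := hnq
    rw [hw, pow_mul, ha1, one_pow]
  have hbq : b ^ q = b := hfix b hbq1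
  have haq : a ^ q = b * a := by
    conv_lhs => rw [show q = (q - 1) + 1 by omega]
    rw [pow_succ, ← hbdef]
  -- Frobenius for q
  have hq_add : ∀ u v : F, (u + v) ^ q = u ^ q + v ^ q := fun u v => by
    rw [hqdef]; exact add_pow_char_pow u v p k
  have hq_sub : ∀ u v : F, (u - v) ^ q = u ^ q - v ^ q := fun u v => by
    rw [hqdef]; exact sub_pow_char_pow u v k
  -- x^τ = (x^σ)^m for all x
  have hτx : ∀ x : F, x ^ τ = (x ^ σ) ^ m := by
    intro x
    have hfixσ : ∀ j : ℕ, (x ^ σ) ^ q ^ (n * j) = x ^ σ := by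
      intro j
      induction j with
      | zero => simp
      | succ i ih =>
        rw [Nat.mul_succ, pow_add, pow_mul (x ^ σ) (q ^ (n * i)) (q ^ n), ih,
          ← pow_mul x σ (q ^ n), mul_comm σ (q ^ n), pow_mul x (q ^ n) σ, hpow_card]
    have key : ∀ j : ℕ, x ^ (∑ i ∈ Finset.range (n * j), q ^ i) = (x ^ σ) ^ j := by
      intro j
      induction j with
      | zero => simp
      | succ i ih =>
        rw [Nat.mul_succ, Finset.sum_range_add, pow_add, ih]
        have hB : ∑ i1 ∈ Finset.range n, q ^ (n * i + i1) = σ * q ^ (n * i) := by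
          rw [hσdef, Finset.sum_mul]
          refine Finset.sum_congr rfl fun j _ => ?_
          rw [pow_add, mul_comm]
        rw [hB, pow_mul x σ (q ^ (n * i)), hfixσ i, ← pow_succ]
    rw [hτdef, hm, key m]
  have hxd : ∀ x : F, x ^ d = (x ^ σ) ^ m * x := by
    intro x
    rw [hdτ, pow_succ, hτx]
  -- c^σ = c^n for fixed points
  have hqi_fix : ∀ (c : F), c ^ q = c → ∀ i : ℕ, c ^ q ^ i = c := by
    intro c hc i
    induction i with
    | zero => simp
    | succ j ih => rw [pow_succ, pow_mul c (q ^ j) q, ih, hc]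
  have hcσ : ∀ (c : F), c ^ q = c → c ^ σ = c ^ n := by
    intro c hc
    rw [hσdef, ← Finset.prod_pow_eq_pow_sum, Finset.prod_congr rfl fun i _ => hqi_fix c hc i,
      Finset.prod_const, Finset.card_range]
  have hnm1 : n * m + 1 = p := by
    have h1 : p - 1 + 1 = p := by omega
    rw [← hm, h1]
  -- nonzero multiplier
  have hmulne : ∀ x : F, x ≠ 0 → (x ^ σ) ^ m + a ≠ 0 := by
    intro x hx h0
    have h1 : (x ^ σ) ^ m = -a := by linear_combination h0
    have h2 : ((x ^ σ) ^ m) ^ (q - 1) = 1 := by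
      rw [← pow_mul (x ^ σ) m (q - 1), mul_comm m (q - 1), pow_mul (x ^ σ) (q - 1) m,
        hcq1 x hx, one_pow]
    rw [h1, Even.neg_pow hqe] at h2
    exact ha2 h2
  constructor
  · -- first map bijective
    rw [← Finite.injective_iff_bijective]
    intro x y hxy
    simp only [] at hxy
    have hxy2 : x ^ d = y ^ d := mul_left_cancel₀ (inv_ne_zero ha0) hxy
    by_cases hx : x = 0
    · subst hx
      rw [zero_pow hd0] at hxy2
      exact ((pow_eq_zero_iff hd0).mp hxy2.symm).symm
    by_cases hy : y = 0
    · subst hy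
      rw [zero_pow hd0] at hxy2
      exact (pow_eq_zero_iff hd0).mp hxy2
    have hcx : (x ^ σ) ^ q = x ^ σ := hfix _ (hcq1 x hx)
    have hcy : (y ^ σ) ^ q = y ^ σ := hfix _ (hcq1 y hy)
    have hXσ : ∀ z : F, (z ^ σ) ^ q = z ^ σ → (z ^ d) ^ σ = (z ^ σ) ^ p := by
      intro z hz
      rw [hxd z, mul_pow, ← pow_mul (z ^ σ) m σ, mul_comm m σ, pow_mul (z ^ σ) σ m,
        hcσ (z ^ σ) hz, ← pow_mul (z ^ σ) n m, ← pow_succ, hnm1]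
    have hc : (x ^ σ) ^ p = (y ^ σ) ^ p := by
      rw [← hXσ x hcx, ← hXσ y hcy, hxy2]
    have hceq : x ^ σ = y ^ σ := by
      have h1 : (x ^ σ - y ^ σ) ^ p = 0 := by rw [sub_pow_char, hc, sub_self]
      exact sub_eq_zero.mp ((pow_eq_zero_iff hp.ne_zero).mp h1)
    have hfin : (x ^ σ) ^ m * x = (x ^ σ) ^ m * y := by
      rw [← hxd x, hxy2, hxd y, hceq]
    exact mul_left_cancel₀ (pow_ne_zero m (pow_ne_zero σ hx)) hfin
  · -- second map bijective
    rw [← Finite.injective_iff_bijective]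
    intro x y hxy
    simp only [] at hxy
    have hxy2 : x ^ d + a * x = y ^ d + a * y := by
      have h := congrArg (fun t => a * t) hxy
      simp only [mul_add, ← mul_assoc, mul_inv_cancel₀ ha0, one_mul] at h
      exact h
    have hzero : ∀ z : F, z ≠ 0 → z ^ d + a * z ≠ 0 := by
      intro z hz h0
      rw [hxd z] at h0
      have h1 : ((z ^ σ) ^ m + a) * z = 0 := by linear_combination h0
      rcases mul_eq_zero.mp h1 with h2 | h2
      · exact hmulne z hz h2
      · exact hz h2
    by_cases hx : x = 0
    · subst hx
      by_cases hy : y = 0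
      · rw [hy]
      · exfalso
        apply hzero y hy
        rw [← hxy2, zero_pow hd0, mul_zero, add_zero]
    by_cases hy : y = 0
    · exfalso
      apply hzero x hx
      rw [hxy2, hy, zero_pow hd0, mul_zero, add_zero]
    -- main case
    set c := x ^ σ with hcdef
    set c' := y ^ σ with hc'def
    have hc0 : c ≠ 0 := pow_ne_zero σ hx
    have hc'0 : c' ≠ 0 := pow_ne_zero σ hy
    have hcq1x : c ^ (q - 1) = 1 := hcq1 x hx
    have hcq1y : c' ^ (q - 1) = 1 := hcq1 y hy
    have hcq : c ^ q = c := hfix c hcq1x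
    have hc'q : c' ^ q = c' := hfix c' hcq1y
    have hE0 : (c ^ m + a) * x = (c' ^ m + a) * y := by
      rw [hxd x, hxd y] at hxy2
      rw [hcdef, hc'def]
      linear_combination hxy2
    -- Frobenius expansion of the multiplier
    have hfrob : ∀ (z : F), z ^ q = z → ∀ i : ℕ, (z ^ m + a) ^ q ^ i = z ^ m + a * b ^ i := by
      intro z hz i
      induction i with
      | zero => simp
      | succ j ih =>
        rw [pow_succ, pow_mul (z ^ m + a) (q ^ j) q, ih, hq_add]
        have hzq : (z ^ m) ^ q = z ^ m := by
          rw [← pow_mul z m q, mul_comm m q, pow_mul z q m, hz]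
        have hbjq : (b ^ j) ^ q = b ^ j := by
          rw [← pow_mul b j q, mul_comm j q, pow_mul b q j, hbq]
        rw [hzq, mul_pow, haq, hbjq, pow_succ]
        ring
    have hfrobσ : ∀ (z : F), z ^ q = z →
        (z ^ m + a) ^ σ = ∏ i ∈ Finset.range n, (z ^ m + a * b ^ i) := by
      intro z hz
      rw [hσdef, ← Finset.prod_pow_eq_pow_sum]
      exact Finset.prod_congr rfl fun i _ => hfrob z hz i
    -- order of b
    have hbfin : IsOfFinOrder b := isOfFinOrder_iff_pow_eq_one.mpr ⟨n, hn, ha1⟩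
    set e := orderOf b with hedef
    have he0 : 0 < e := hbfin.orderOf_pos
    have hbe : b ^ e = 1 := pow_orderOf_eq_one b
    have hprim : IsPrimitiveRoot b e := ⟨hbe, fun l hl => orderOf_dvd_of_pow_eq_one hl⟩
    obtain ⟨r, hr⟩ : e ∣ n := orderOf_dvd_of_pow_eq_one ha1
    haveI : NeZero e := ⟨he0.ne'⟩
    set α : F := (-a) ^ e with hαdef
    -- product formula over one period
    have G1 : ∀ w : F, (∏ i ∈ Finset.range e, (w + a * b ^ i)) = w ^ e - α := by
      intro w
      rw [hαdef, IsPrimitiveRoot.pow_sub_pow_eq_prod_sub_mul w (-a) he0 hprim]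
      refine Finset.prod_nbij (fun i => b ^ i) ?_ ?_ ?_ ?_
      · intro i _
        refine (Polynomial.mem_nthRootsFinset he0 (1 : F)).mpr ?_
        rw [← pow_mul b i e, mul_comm i e, pow_mul b e i, hbe, one_pow]
      · exact hprim.injOn_pow
      · intro ζ hζ
        have hζ1 : ζ ^ e = 1 := (Polynomial.mem_nthRootsFinset he0 (1 : F)).mp (Finset.mem_coe.mp hζ)
        obtain ⟨i, hik, hpow⟩ := hprim.eq_pow_of_pow_eq_one hζ1
        exact ⟨i, Finset.mem_coe.mpr (Finset.mem_range.mpr hik), hpow⟩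
      · intro i _
        ring
    -- product formula over all of range n
    have G2 : ∀ w : F, (∏ i ∈ Finset.range n, (w + a * b ^ i)) = (w ^ e - α) ^ r := by
      intro w
      have key : ∀ r' : ℕ, (∏ i ∈ Finset.range (e * r'), (w + a * b ^ i)) = (w ^ e - α) ^ r' := by
        intro r'
        induction r' with
        | zero => simp
        | succ j ih =>
          rw [Nat.mul_succ, Finset.prod_range_add, ih, pow_succ]
          congr 1
          rw [← G1 w]
          refine Finset.prod_congr rfl fun i _ => ?_
          have hbp : b ^ (e * j + i) = b ^ i := by
            rw [pow_add, pow_mul, hbe, one_pow, one_mul]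
          rw [hbp]
      rw [hr]; exact key r
    -- assemble the main equation
    have E : (c ^ (m * e) - α) ^ r * c = (c' ^ (m * e) - α) ^ r * c' := by
      have h := congrArg (· ^ σ) hE0
      simp only [mul_pow] at h
      rw [hfrobσ c hcq, hfrobσ c' hc'q, G2 (c ^ m), G2 (c' ^ m),
        ← pow_mul c m e, ← pow_mul c' m e, ← hcdef, ← hc'def] at h
      exact h
    have hrme : r * (m * e) = p - 1 := by rw [hm, hr]; ring
    have hZ : c ^ (m * e) * (c ^ (m * e) - α) ^ (p - 1)
        = c' ^ (m * e) * (c' ^ (m * e) - α) ^ (p - 1) := by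
      have h := congrArg (· ^ (m * e)) E
      simp only [mul_pow, ← pow_mul] at h
      rw [hrme] at h
      linear_combination h
    -- prerequisites for the key lemma
    obtain ⟨l, hl⟩ : m * e ∣ q - 1 := by
      have h1 : m * e ∣ p - 1 := ⟨r, by rw [hm, hr]; ring⟩
      exact h1.trans (by simpa using Nat.sub_dvd_pow_sub_pow p 1 k)
    have hLr : (p - 1) * l = (q - 1) * r := by rw [hm, hr, hl]; ring
    have hz1l : (c ^ (m * e)) ^ l = 1 := by
      rw [← pow_mul c (m * e) l, ← hl, hcq1x]
    have hz2l : (c' ^ (m * e)) ^ l = 1 := by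
      rw [← pow_mul c' (m * e) l, ← hl, hcq1y]
    have hαq : α ^ q = α := by
      have h1 : (-a) ^ q = b * (-a) := by rw [hqodd.neg_pow, haq]; ring
      rw [hαdef, ← pow_mul (-a) e q, mul_comm e q, pow_mul (-a) q e, h1, mul_pow, hbe, one_mul]
    have hαl : α ^ l ≠ 1 := by
      intro h0
      apply ha2
      have h1 : (-a) ^ (q - 1) = b := by rw [Even.neg_pow hqe, ← hbdef]
      have h2 : (-a) ^ (q - 1) = 1 := by
        rw [hl, show m * e * l = e * (l * m) by ring, pow_mul (-a) e (l * m), ← hαdef,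
          pow_mul α l m, h0, one_pow]
      rw [← h1]; exact h2
    have hz1q : (c ^ (m * e)) ^ q = c ^ (m * e) := by
      rw [← pow_mul c (m * e) q, mul_comm (m * e) q, pow_mul c q (m * e), hcq]
    have hz2q : (c' ^ (m * e)) ^ q = c' ^ (m * e) := by
      rw [← pow_mul c' (m * e) q, mul_comm (m * e) q, pow_mul c' q (m * e), hc'q]
    have hz2a : c' ^ (m * e) - α ≠ 0 := by
      intro h0
      exact hαl (by rw [← sub_eq_zero.mp h0]; exact hz2l)
    have hz1a : c ^ (m * e) - α ≠ 0 := by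
      intro h0
      exact hαl (by rw [← sub_eq_zero.mp h0]; exact hz1l)
    have hsubq : ∀ u v : F, u ^ q = u → v ^ q = v → u - v ≠ 0 → (u - v) ^ ((p - 1) * l) = 1 := by
      intro u v hu hv huv
      have h1 : (u - v) ^ q = u - v := by rw [hq_sub, hu, hv]
      have h2 : (u - v) ^ (q - 1) = 1 := hfix' _ huv h1
      rw [hLr, pow_mul, h2, one_pow]
    -- apply the key lemma
    have hzz : c ^ (m * e) = c' ^ (m * e) := by
      refine cpp_key_cancel p α _ _ l ((p - 1) * l) rfl hz1l hαl ?_ hz2a ?_ hZ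
      · intro hne; exact hsubq _ _ hz1q hz2q hne
      · exact hsubq _ _ hz2q hαq hz2a
    have hcc' : c = c' := by
      have h2 := E
      rw [← hzz] at h2
      exact mul_left_cancel₀ (pow_ne_zero r hz1a) h2
    have h3 : (c ^ m + a) * x = (c ^ m + a) * y := by rw [hE0, hcc']
    have hcma : c ^ m + a ≠ 0 := by rw [hcdef]; exact hmulne x hx
    exact mul_left_cancel₀ hcma h3
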